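/- Let $\hat\tau = \{(x,y) : x \ge 0, y \ge 0, x+y \le 1\}$ and $\hat\varphi_0(x,y) = 1-x-y$. For $\alpha > 1$, $\int_{\hat\tau} \mathrm{sgn}\big({-(\alpha-1)} + \alpha x + \alpha y\big)\,\hat\varphi_0(x,y)\,dx\,dy = \frac{1}{6} - \frac{1}{3}\cdot\frac{(\alpha-1)^2(\alpha+2)}{\alpha^3}$. -/

import Mathlib

open MeasureTheory Set

lemma triClosed (c : ℝ) :
    IsClosed {p : ℝ × ℝ | 0 ≤ p.1 ∧ 0 ≤ p.2 ∧ p.1 + p.2 ≤ c} := by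
  have : {p : ℝ × ℝ | 0 ≤ p.1 ∧ 0 ≤ p.2 ∧ p.1 + p.2 ≤ c} =
      {p : ℝ × ℝ | 0 ≤ p.1} ∩ ({p | 0 ≤ p.2} ∩ {p | p.1 + p.2 ≤ c}) := rfl
  rw [this]
  exact (isClosed_le continuous_const continuous_fst).inter
    ((isClosed_le continuous_const continuous_snd).inter
      (isClosed_le (continuous_fst.add continuous_snd) continuous_const))

lemma triCompact (c : ℝ) :
    IsCompact {p : ℝ × ℝ | 0 ≤ p.1 ∧ 0 ≤ p.2 ∧ p.1 + p.2 ≤ c} := by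
  refine (isCompact_Icc (a := ((0 : ℝ), (0 : ℝ))) (b := (c, c))).of_isClosed_subset
    (triClosed c) ?_
  rintro ⟨x, y⟩ ⟨h1, h2, h3⟩
  simp only [Set.mem_Icc, Prod.mk_le_mk]
  exact ⟨⟨h1, h2⟩, ⟨by linarith, by linarith⟩⟩

lemma triIntegral (c : ℝ) (hc : 0 ≤ c) :
    (∫ p in {p : ℝ × ℝ | 0 ≤ p.1 ∧ 0 ≤ p.2 ∧ p.1 + p.2 ≤ c},
        (1 - p.1 - p.2)) = c ^ 2 / 2 - c ^ 3 / 3 := by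
  set T := {p : ℝ × ℝ | 0 ≤ p.1 ∧ 0 ≤ p.2 ∧ p.1 + p.2 ≤ c} with hT
  have hTm : MeasurableSet T := (triClosed c).measurableSet
  have hcont : Continuous fun p : ℝ × ℝ => 1 - p.1 - p.2 := by fun_prop
  have hint : Integrable (T.indicator fun p : ℝ × ℝ => 1 - p.1 - p.2) := by
    rw [integrable_indicator_iff hTm]
    exact hcont.continuousOn.integrableOn_compact (triCompact c)
  rw [← integral_indicator hTm]
  rw [Measure.volume_eq_prod] at hint ⊢
  rw [integral_prod _ hint]
  have key : ∀ x : ℝ,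
      (∫ y : ℝ, T.indicator (fun p : ℝ × ℝ => 1 - p.1 - p.2) (x, y)) =
        (Icc (0 : ℝ) c).indicator
          (fun x => (1 - x) * (c - x) - (c - x) ^ 2 / 2) x := by
    intro x
    by_cases hx : 0 ≤ x ∧ x ≤ c
    · have h1 : (fun y : ℝ => T.indicator (fun p : ℝ × ℝ => 1 - p.1 - p.2) (x, y)) =
          (Icc (0 : ℝ) (c - x)).indicator (fun y => 1 - x - y) := by
        funext y
        by_cases hy : y ∈ Icc (0 : ℝ) (c - x)
        · rw [indicator_of_mem hy]
          have : (x, y) ∈ T := ⟨hx.1, hy.1, by have := hy.2; simpa using by linarith⟩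
          rw [indicator_of_mem this]
        · rw [indicator_of_notMem hy]
          have : (x, y) ∉ T := by
            intro h
            exact hy ⟨h.2.1, by have := h.2.2; linarith⟩
          rw [indicator_of_notMem this]
      rw [h1, integral_indicator measurableSet_Icc,
        MeasureTheory.integral_Icc_eq_integral_Ioc,
        ← intervalIntegral.integral_of_le (by linarith : (0 : ℝ) ≤ c - x)]
      rw [indicator_of_mem (Set.mem_Icc.mpr hx)]
      have : (∫ y in (0 : ℝ)..(c - x), (1 - x - y)) =
          (1 - x) * (c - x) - (c - x) ^ 2 / 2 := by
        rw [intervalIntegral.integral_sub intervalIntegrable_const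
          intervalIntegral.intervalIntegrable_id, integral_id,
          intervalIntegral.integral_const]
        simp
        ring
      exact this
    · have hx' : x ∉ Icc (0 : ℝ) c := by
        intro h
        exact hx ⟨h.1, h.2⟩
      rw [indicator_of_notMem hx']
      have h1 : (fun y : ℝ => T.indicator (fun p : ℝ × ℝ => 1 - p.1 - p.2) (x, y)) =
          fun _ => (0 : ℝ) := by
        funext y
        apply indicator_of_notMem
        intro h
        exact hx ⟨h.1, by have := h.2.2; have := h.2.1; linarith⟩
      rw [h1, integral_zero]
  simp only [key]
  rw [integral_indicator measurableSet_Icc,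
    MeasureTheory.integral_Icc_eq_integral_Ioc,
    ← intervalIntegral.integral_of_le hc]
  have hft : ∀ x ∈ Set.uIcc (0 : ℝ) c,
      HasDerivAt (fun x : ℝ => (c - c ^ 2 / 2) * x - x ^ 2 / 2 + x ^ 3 / 6)
        ((1 - x) * (c - x) - (c - x) ^ 2 / 2) x := by
    intro x _
    have h1 : HasDerivAt (fun x : ℝ => (c - c ^ 2 / 2) * x) (c - c ^ 2 / 2) x := by
      simpa using (hasDerivAt_id x).const_mul (c - c ^ 2 / 2)
    have h2 : HasDerivAt (fun x : ℝ => x ^ 2 / 2) x x := by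
      simpa using (hasDerivAt_pow 2 x).div_const 2
    have h3 : HasDerivAt (fun x : ℝ => x ^ 3 / 6) (x ^ 2 / 2) x := by
      have := (hasDerivAt_pow 3 x).div_const 6
      exact this.congr_deriv (by ring)
    have := (h1.sub h2).add h3
    exact this.congr_deriv (by ring)
  rw [intervalIntegral.integral_eq_sub_of_hasDerivAt hft ((by fun_prop : Continuous fun x : ℝ => (1 - x) * (c - x) - (c - x) ^ 2 / 2).intervalIntegrable 0 c)]
  ring

theorem stmt17 (α : ℝ) (hα : 1 < α) :
    (∫ p in {p : ℝ × ℝ | 0 ≤ p.1 ∧ 0 ≤ p.2 ∧ p.1 + p.2 ≤ 1},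
        Real.sign (-(α - 1) + α * p.1 + α * p.2) * (1 - p.1 - p.2)) =
      1 / 6 - 1 / 3 * ((α - 1) ^ 2 * (α + 2) / α ^ 3) := by
  have hα0 : (0 : ℝ) < α := by linarith
  set c : ℝ := (α - 1) / α with hc
  have hc0 : 0 < c := div_pos (by linarith) hα0
  have hc1 : c < 1 := by
    rw [hc, div_lt_one hα0]; linarith
  have hαc : α * c = α - 1 := by
    rw [hc]; field_simp
  set S := {p : ℝ × ℝ | 0 ≤ p.1 ∧ 0 ≤ p.2 ∧ p.1 + p.2 ≤ 1} with hS
  set A := {p : ℝ × ℝ | p.1 + p.2 ≤ c} with hA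
  have hSm : MeasurableSet S := (triClosed 1).measurableSet
  have hAm : MeasurableSet A :=
    (isClosed_le (continuous_fst.add continuous_snd) continuous_const).measurableSet
  -- the line x + y = c is null
  have hline : volume {p : ℝ × ℝ | p.1 + p.2 = c} = 0 := by
    have hLm : MeasurableSet {p : ℝ × ℝ | p.1 + p.2 = c} :=
      (isClosed_eq (continuous_fst.add continuous_snd) continuous_const).measurableSet
    rw [Measure.volume_eq_prod, Measure.prod_apply hLm]
    have : ∀ x : ℝ, volume (Prod.mk x ⁻¹' {p : ℝ × ℝ | p.1 + p.2 = c}) = 0 := by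
      intro x
      have : Prod.mk x ⁻¹' {p : ℝ × ℝ | p.1 + p.2 = c} = {c - x} := by
        ext y; simp [Set.mem_preimage]; constructor <;> intro h <;> linarith
      rw [this]; simp
    simp only [this]
    simp
  -- a.e. rewrite of the integrand on S
  have hcongr :
      (∫ p in S, Real.sign (-(α - 1) + α * p.1 + α * p.2) * (1 - p.1 - p.2)) =
        ∫ p in S, ((1 - p.1 - p.2) - 2 * A.indicator (fun p : ℝ × ℝ => 1 - p.1 - p.2) p) := by
    apply setIntegral_congr_ae hSm
    have hae : ∀ᵐ p : ℝ × ℝ, p ∉ {p : ℝ × ℝ | p.1 + p.2 = c} :=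
      measure_eq_zero_iff_ae_notMem.mp hline
    filter_upwards [hae] with p hp _
    have hpne : p.1 + p.2 ≠ c := hp
    have harg : -(α - 1) + α * p.1 + α * p.2 = α * (p.1 + p.2 - c) := by
      rw [mul_sub, hαc]; ring
    rcases lt_or_gt_of_ne hpne with h | h
    · have hneg : -(α - 1) + α * p.1 + α * p.2 < 0 := by
        rw [harg]
        exact mul_neg_of_pos_of_neg hα0 (by linarith)
      rw [Real.sign_of_neg hneg, indicator_of_mem (by exact le_of_lt h : p ∈ A)]
      ring
    · have hpos : 0 < -(α - 1) + α * p.1 + α * p.2 := by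
        rw [harg]
        exact mul_pos hα0 (by linarith)
      rw [Real.sign_of_pos hpos, indicator_of_notMem (by simp [hA]; linarith : p ∉ A)]
      ring
  rw [hcongr]
  have hintS : IntegrableOn (fun p : ℝ × ℝ => 1 - p.1 - p.2) S := by
    exact (by fun_prop : Continuous fun p : ℝ × ℝ => 1 - p.1 - p.2).continuousOn.integrableOn_compact
      (triCompact 1)
  have hintA : IntegrableOn (fun p : ℝ × ℝ =>
      A.indicator (fun p : ℝ × ℝ => 1 - p.1 - p.2) p) S := by
    rw [IntegrableOn, integrable_indicator_iff hAm, IntegrableOn,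
      Measure.restrict_restrict hAm]
    exact hintS.mono_set (Set.inter_subset_right)
  rw [integral_sub hintS (hintA.const_mul 2)]
  rw [MeasureTheory.integral_const_mul, setIntegral_indicator hAm]
  have hSA : S ∩ A = {p : ℝ × ℝ | 0 ≤ p.1 ∧ 0 ≤ p.2 ∧ p.1 + p.2 ≤ c} := by
    ext p
    simp only [Set.mem_inter_iff, hS, hA, Set.mem_setOf_eq]
    constructor
    · rintro ⟨⟨h1, h2, _⟩, h4⟩; exact ⟨h1, h2, h4⟩
    · rintro ⟨h1, h2, h3⟩; exact ⟨⟨h1, h2, by linarith⟩, h3⟩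
  rw [hSA, triIntegral 1 (by norm_num), triIntegral c hc0.le]
  rw [hc]
  field_simp
  ring
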